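/- With Û^M_srNMC(λ) defined as above, the expectation E[Û^M_srNMC(λ)] is monotonically increasing in M: for all 1 ≤ M₁ ≤ M₂, E[Û^{M₁}_srNMC(λ)] ≤ E[Û^{M₂}_srNMC(λ)]. -/

import Mathlib

open MeasureTheory Real



section Aux

variable {Θ Y : Type*} [MeasurableSpace Θ] [MeasurableSpace Y]

/-- the `i`-th term of the srNMC sum, on the space of `M` (θ, y) pairs -/
noncomputable def srTerm (l : Y → Θ → ℝ) (M : ℕ) (i : Fin M) (w : Fin M → Θ × Y) : ℝ :=
  (∏ j, l (w j).2 (w j).1) *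
    Real.log (l (w i).2 (w i).1 / ((M : ℝ)⁻¹ * ∑ j, l (w i).2 (w j).1))

/-- the tilted term on the space `(Fin M → Θ) × Y` -/
noncomputable def srH (l : Y → Θ → ℝ) (M : ℕ) (k : Fin M) (p : (Fin M → Θ) × Y) : ℝ :=
  l p.2 (p.1 k) * Real.log (l p.2 (p.1 k) / ((M : ℝ)⁻¹ * ∑ j, l p.2 (p.1 j)))

/-- symmetrized tilted integrand on `(Fin M → Θ) × Y` -/
noncomputable def srG (l : Y → Θ → ℝ) (M : ℕ) (p : (Fin M → Θ) × Y) : ℝ :=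
  (M : ℝ)⁻¹ * ∑ k, srH l M k p

variable {l : Y → Θ → ℝ} (hml : Measurable fun z : Θ × Y => l z.2 z.1)

include hml

lemma meas_pair {M : ℕ} (i j : Fin M) :
    Measurable fun w : Fin M → Θ × Y => l (w i).2 (w j).1 :=
by
  have m : Measurable fun w : Fin M → Θ × Y => ((w j).1, (w i).2) :=
    (Measurable.fst (measurable_pi_apply j)).prodMk (Measurable.snd (measurable_pi_apply i))
  exact hml.comp m

lemma meas_srTerm (M : ℕ) (i : Fin M) : Measurable (srTerm l M i) := by
  unfold srTerm
  refine Measurable.mul (Finset.measurable_prod _ fun j _ => meas_pair hml j j) ?_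
  exact (Measurable.div (meas_pair hml i i)
    (measurable_const.mul (Finset.measurable_sum _ fun j _ => meas_pair hml i j))).log

lemma meas_pairH {M : ℕ} (j : Fin M) :
    Measurable fun p : (Fin M → Θ) × Y => l p.2 (p.1 j) :=
by
  have m : Measurable fun p : (Fin M → Θ) × Y => (p.1 j, p.2) :=
    (Measurable.comp (measurable_pi_apply j) measurable_fst).prodMk measurable_snd
  exact hml.comp m

lemma meas_srH (M : ℕ) (k : Fin M) : Measurable (srH l M k) := by
  unfold srH
  refine Measurable.mul (meas_pairH hml k) ?_
  exact (Measurable.div (meas_pairH hml k)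
    (measurable_const.mul (Finset.measurable_sum _ fun j _ => meas_pairH hml j))).log

lemma meas_srG (M : ℕ) : Measurable (srG l M) :=
  measurable_const.mul (Finset.measurable_sum _ fun k _ => meas_srH hml M k)

end Aux

section Aux2

open ENNReal

variable {Θ Y : Type*} [MeasurableSpace Θ] [MeasurableSpace Y]
  {Pθ : Measure Θ} [IsProbabilityMeasure Pθ] {ν : Measure Y} [SigmaFinite ν]
  {l : Y → Θ → ℝ}

lemma int_l_y (hnorm : ∀ θ, ∫ y, l y θ ∂ν = 1) (θ : Θ) :
    Integrable (fun y => l y θ) ν := by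
  by_contra h
  have h1 := hnorm θ
  rw [integral_undef h] at h1
  exact one_ne_zero h1.symm

lemma lint_l_y (hml : Measurable fun z : Θ × Y => l z.2 z.1)
    (hl : ∀ y θ, 0 < l y θ) (hnorm : ∀ θ, ∫ y, l y θ ∂ν = 1) (θ : Θ) :
    ∫⁻ y, ENNReal.ofReal (l y θ) ∂ν = 1 := by
  rw [← ofReal_integral_eq_lintegral_ofReal (int_l_y hnorm θ)
    (Filter.Eventually.of_forall fun y => (hl y θ).le), hnorm θ, ENNReal.ofReal_one]

lemma lint_l_prod (hml : Measurable fun z : Θ × Y => l z.2 z.1)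
    (hl : ∀ y θ, 0 < l y θ) (hnorm : ∀ θ, ∫ y, l y θ ∂ν = 1) :
    ∫⁻ z : Θ × Y, ENNReal.ofReal (l z.2 z.1) ∂(Pθ.prod ν) = 1 := by
  rw [MeasureTheory.lintegral_prod _ hml.ennreal_ofReal.aemeasurable]
  simp only [lint_l_y hml hl hnorm, lintegral_one, measure_univ, mul_one]

lemma int_l_prod (hml : Measurable fun z : Θ × Y => l z.2 z.1)
    (hl : ∀ y θ, 0 < l y θ) (hnorm : ∀ θ, ∫ y, l y θ ∂ν = 1) :
    Integrable (fun z : Θ × Y => l z.2 z.1) (Pθ.prod ν) := by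
  refine ⟨hml.aestronglyMeasurable, ?_⟩
  rw [hasFiniteIntegral_iff_norm]
  have : ∀ z : Θ × Y, ENNReal.ofReal ‖l z.2 z.1‖ = ENNReal.ofReal (l z.2 z.1) := fun z => by
    rw [Real.norm_eq_abs, abs_of_pos (hl _ _)]
  simp_rw [this, lint_l_prod hml hl hnorm]
  exact one_lt_top

/-- product of measurable functions of separate coordinates: lintegral over pi measure -/
lemma lintegral_pi_fin_prod {β : Type*} [MeasurableSpace β] (μ : Measure β) [SigmaFinite μ] :
    ∀ (n : ℕ) (g : Fin n → β → ℝ≥0∞), (∀ i, Measurable (g i)) →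
      ∫⁻ x : Fin n → β, ∏ i, g i (x i) ∂(Measure.pi fun _ => μ) = ∏ i, ∫⁻ y, g i y ∂μ := by
  intro n
  induction n with
  | zero => intro g hg; simp
  | succ n ih =>
    intro g hg
    have h := (measurePreserving_piFinSuccAbove (fun _ : Fin (n + 1) => μ) 0).symm
    rw [← h.lintegral_comp (f := fun x : Fin (n + 1) → β => ∏ i, g i (x i))
      (Finset.measurable_prod _ fun i _ => (hg i).comp (measurable_pi_apply i))]
    have : ∀ p : β × (Fin n → β),
        (∏ i, g i ((MeasurableEquiv.piFinSuccAbove (fun _ => β) 0).symm p i)) =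
          g 0 p.1 * ∏ i : Fin n, g i.succ (p.2 i) := by
      intro p
      rw [Fin.prod_univ_succ]
      simp [MeasurableEquiv.piFinSuccAbove_symm_apply, Fin.insertNthEquiv]
    simp_rw [this]
    rw [lintegral_prod_mul (f := g 0) (g := fun v : Fin n → β => ∏ i, g i.succ (v i))
      (hg 0).aemeasurable
      (Finset.measurable_prod _ (fun i _ => (hg i.succ).comp (measurable_pi_apply i))).aemeasurable]
    rw [ih _ fun i => hg i.succ, Fin.prod_univ_succ]

end Aux2

section Aux3

variable {Θ Y : Type*} [MeasurableSpace Θ] [MeasurableSpace Y]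
  {Pθ : Measure Θ} [IsProbabilityMeasure Pθ] {ν : Measure Y} [SigmaFinite ν]
  {l : Y → Θ → ℝ}

/-- application formula for `piCongrLeft` with a constant family -/
lemma piCongrLeft_const_apply {γ : Type*} [MeasurableSpace γ] {ι ι' : Type*} (e : ι ≃ ι')
    (g : ι → γ) (j : ι') :
    MeasurableEquiv.piCongrLeft (fun _ => γ) e g j = g (e.symm j) := by
  have h := MeasurableEquiv.piCongrLeft_apply_apply (β := fun _ : ι' => γ) e g (e.symm j)
  rw [e.apply_symm_apply] at h
  exact h

lemma int_prod_l (hml : Measurable fun z : Θ × Y => l z.2 z.1)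
    (hl : ∀ y θ, 0 < l y θ) (hnorm : ∀ θ, ∫ y, l y θ ∂ν = 1) (M : ℕ) :
    Integrable (fun w : Fin M → Θ × Y => ∏ j, l (w j).2 (w j).1)
      (Measure.pi fun _ => Pθ.prod ν) := by
  letI : MeasureSpace (Θ × Y) := { volume := Pθ.prod ν }
  haveI : SigmaFinite (volume : Measure (Θ × Y)) :=
    inferInstanceAs (SigmaFinite (Pθ.prod ν))
  exact Integrable.fintype_prod (f := fun _ : Fin M => fun z : Θ × Y => l z.2 z.1)
    (fun _ => int_l_prod hml hl hnorm)

lemma avg_pos (hl : ∀ y θ, 0 < l y θ) {M : ℕ} (hM : 1 ≤ M) (y : Y) (θs : Fin M → Θ) :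
    0 < (M : ℝ)⁻¹ * ∑ j, l y (θs j) := by
  have hM0 : (0 : ℝ) < M := by exact_mod_cast hM
  exact mul_pos (inv_pos.2 hM0) (Finset.sum_pos (fun j _ => hl _ _) ⟨⟨0, hM⟩, Finset.mem_univ _⟩)

lemma log_ratio_le (hl : ∀ y θ, 0 < l y θ) {M : ℕ} (hM : 1 ≤ M) (y : Y) (θs : Fin M → Θ)
    (k : Fin M) :
    Real.log (l y (θs k) / ((M : ℝ)⁻¹ * ∑ j, l y (θs j))) ≤ Real.log M := by
  have hM0 : (0 : ℝ) < M := by exact_mod_cast hM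
  have havg := avg_pos hl hM y θs
  refine Real.log_le_log (div_pos (hl _ _) havg) ?_
  rw [div_le_iff₀ havg, ← mul_assoc, mul_inv_cancel₀ hM0.ne', one_mul]
  exact Finset.single_le_sum (fun j _ => (hl y (θs j)).le) (Finset.mem_univ k)

lemma srTerm_le (hl : ∀ y θ, 0 < l y θ) {M : ℕ} (hM : 1 ≤ M) (i : Fin M)
    (w : Fin M → Θ × Y) :
    srTerm l M i w ≤ (∏ j, l (w j).2 (w j).1) * Real.log M := by
  unfold srTerm
  exact mul_le_mul_of_nonneg_left (log_ratio_le hl hM ((w i).2) (fun j => (w j).1) i)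
    (Finset.prod_nonneg fun j _ => (hl _ _).le)

lemma sum_srTerm_eq (M : ℕ) (hM : 1 ≤ M) (w : Fin M → Θ × Y) :
    (∑ i, srTerm l M i w) = (M : ℝ) * ((∏ i, l (w i).2 (w i).1) *
      ((M : ℝ)⁻¹ * ∑ i, Real.log (l (w i).2 (w i).1 /
        ((M : ℝ)⁻¹ * ∑ j, l (w i).2 (w j).1)))) := by
  have hM0 : (M : ℝ) ≠ 0 := by positivity
  unfold srTerm
  rw [← Finset.mul_sum]
  field_simp
  congr 1
  refine Finset.sum_congr rfl fun x _ => ?_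
  rw [mul_comm (l (w x).2 (w x).1) (M : ℝ)]

lemma int_srTerm (hml : Measurable fun z : Θ × Y => l z.2 z.1)
    (hl : ∀ y θ, 0 < l y θ) (hnorm : ∀ θ, ∫ y, l y θ ∂ν = 1) {M : ℕ} (hM : 1 ≤ M)
    (hInt : Integrable
      (fun w : Fin M → Θ × Y => (∏ i, l (w i).2 (w i).1) *
        ((M : ℝ)⁻¹ * ∑ i, Real.log (l (w i).2 (w i).1 /
          ((M : ℝ)⁻¹ * ∑ j, l (w i).2 (w j).1))))
      (Measure.pi fun _ : Fin M => Pθ.prod ν)) (i : Fin M) :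
    Integrable (srTerm l M i) (Measure.pi fun _ : Fin M => Pθ.prod ν) := by
  have hP := int_prod_l (Pθ := Pθ) hml hl hnorm M
  have hSS : Integrable (fun w : Fin M → Θ × Y => ∑ j, srTerm l M j w)
      (Measure.pi fun _ : Fin M => Pθ.prod ν) := by
    simp_rw [sum_srTerm_eq M hM]
    exact hInt.const_mul _
  have hlogM : (0 : ℝ) ≤ Real.log M := Real.log_nonneg (by exact_mod_cast hM)
  refine Integrable.mono' (hSS.norm.add (hP.const_mul ((M : ℝ) * Real.log M)))
    (meas_srTerm hml M i).aestronglyMeasurable ?_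
  refine Filter.Eventually.of_forall fun w => ?_
  have hPw : (0 : ℝ) ≤ ∏ j, l (w j).2 (w j).1 := Finset.prod_nonneg fun j _ => (hl _ _).le
  have hub : ∀ j, srTerm l M j w ≤ (∏ j, l (w j).2 (w j).1) * Real.log M :=
    fun j => srTerm_le hl hM j w
  have hsplit : srTerm l M i w + ∑ j ∈ Finset.univ.erase i, srTerm l M j w
      = ∑ j, srTerm l M j w := Finset.add_sum_erase _ (fun j => srTerm l M j w) (Finset.mem_univ i)
  have herase : ∑ j ∈ Finset.univ.erase i, srTerm l M j w
      ≤ (M - 1 : ℝ) * ((∏ j, l (w j).2 (w j).1) * Real.log M) := by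
    refine le_trans (Finset.sum_le_sum fun j _ => hub j) ?_
    rw [Finset.sum_const, Finset.card_erase_of_mem (Finset.mem_univ i), Finset.card_univ,
      Fintype.card_fin, nsmul_eq_mul]
    have : ((M - 1 : ℕ) : ℝ) = (M : ℝ) - 1 := by
      have : (1 : ℕ) ≤ M := hM
      push_cast [this]
      ring
    rw [this]
  have hnorm1 : ∑ j, srTerm l M j w ≤ ‖∑ j, srTerm l M j w‖ := le_abs_self _
  have hnorm2 : -‖∑ j, srTerm l M j w‖ ≤ ∑ j, srTerm l M j w := neg_abs_le _
  have hM1 : (1 : ℝ) ≤ (M : ℝ) := by exact_mod_cast hM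
  have hPlog : (0:ℝ) ≤ (∏ j, l (w j).2 (w j).1) * Real.log M := mul_nonneg hPw hlogM
  set P := ∏ j, l (w j).2 (w j).1 with hPdef
  set A := P * Real.log M with hAdef
  have hMA : (M : ℝ) * Real.log M * P = (M : ℝ) * A := by rw [hAdef]; ring
  have hexp : ((M : ℝ) - 1) * A = (M : ℝ) * A - A := by ring
  have hMAA : A ≤ (M : ℝ) * A := by nlinarith
  simp only [Pi.add_apply, Real.norm_eq_abs, abs_le]
  rw [Real.norm_eq_abs] at hnorm1 hnorm2
  constructor
  · linarith [hub i, hsplit, herase, abs_nonneg (∑ j, srTerm l M j w)]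
  · linarith [hub i, hsplit, herase, abs_nonneg (∑ j, srTerm l M j w)]

lemma integral_srTerm_eq (hml : Measurable fun z : Θ × Y => l z.2 z.1)
    {M : ℕ} (i i' : Fin M) :
    ∫ w, srTerm l M i w ∂(Measure.pi fun _ : Fin M => Pθ.prod ν)
      = ∫ w, srTerm l M i' w ∂(Measure.pi fun _ : Fin M => Pθ.prod ν) := by
  have hmp := measurePreserving_piCongrLeft (fun _ : Fin M => Pθ.prod ν) (Equiv.swap i i')
  rw [← hmp.integral_comp' (srTerm l M i)]
  refine integral_congr_ae (Filter.Eventually.of_forall fun w => ?_)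
  have happ : ∀ j, MeasurableEquiv.piCongrLeft (fun _ => Θ × Y) (Equiv.swap i i') w j
      = w (Equiv.swap i i' j) := by
    intro j
    rw [piCongrLeft_const_apply, Equiv.symm_swap]
  unfold srTerm
  simp_rw [happ]
  rw [Equiv.swap_apply_left,
    Equiv.prod_comp (Equiv.swap i i') (fun j => l (w j).2 (w j).1),
    Equiv.sum_comp (Equiv.swap i i') (fun j => l (w i').2 (w j).1)]

end Aux3

section Aux4

variable {Θ Y : Type*} [MeasurableSpace Θ] [MeasurableSpace Y]
  {Pθ : Measure Θ} [IsProbabilityMeasure Pθ] {ν : Measure Y} [SigmaFinite ν]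
  {l : Y → Θ → ℝ}

lemma meas_l_y (hml : Measurable fun z : Θ × Y => l z.2 z.1) (θ : Θ) :
    Measurable fun y => l y θ := by
  have m : Measurable fun y : Y => ((θ, y) : Θ × Y) := measurable_const.prodMk measurable_id
  exact hml.comp m

/-- the slice functions of `F` at fixed `θs` -/
noncomputable def sliceF (l : Y → Θ → ℝ) (M : ℕ) (i₀ : Fin M) (θs : Fin M → Θ)
    (j : Fin M) (y : Y) : ℝ :=
  if j = i₀ then l y (θs i₀) * Real.log (l y (θs i₀) / ((M : ℝ)⁻¹ * ∑ j', l y (θs j')))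
  else l y (θs j)

lemma meas_sliceF (hml : Measurable fun z : Θ × Y => l z.2 z.1) (M : ℕ) (i₀ : Fin M)
    (θs : Fin M → Θ) (j : Fin M) : Measurable (sliceF l M i₀ θs j) := by
  unfold sliceF
  by_cases h : j = i₀
  · simp only [if_pos h]
    exact (meas_l_y hml _).mul
      ((Measurable.div (meas_l_y hml _) (measurable_const.mul
        (Finset.measurable_sum _ fun j' _ => meas_l_y hml _))).log)
  · simp only [if_neg h]
    exact meas_l_y hml _

lemma sliceF_fact (l : Y → Θ → ℝ) (M : ℕ) (i₀ : Fin M) (θs : Fin M → Θ) (ys : Fin M → Y) :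
    (∏ j, l (ys j) (θs j)) *
      Real.log (l (ys i₀) (θs i₀) / ((M : ℝ)⁻¹ * ∑ j, l (ys i₀) (θs j)))
    = ∏ j, sliceF l M i₀ θs j (ys j) := by
  rw [← Finset.mul_prod_erase Finset.univ (fun j => sliceF l M i₀ θs j (ys j))
    (Finset.mem_univ i₀),
    ← Finset.mul_prod_erase Finset.univ (fun j => l (ys j) (θs j)) (Finset.mem_univ i₀)]
  have h1 : sliceF l M i₀ θs i₀ (ys i₀)
      = l (ys i₀) (θs i₀) *
        Real.log (l (ys i₀) (θs i₀) / ((M : ℝ)⁻¹ * ∑ j', l (ys i₀) (θs j'))) := if_pos rfl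
  have h2 : ∏ j ∈ Finset.univ.erase i₀, sliceF l M i₀ θs j (ys j)
      = ∏ j ∈ Finset.univ.erase i₀, l (ys j) (θs j) :=
    Finset.prod_congr rfl fun j hj => if_neg (Finset.mem_erase.1 hj).1
  rw [h1, h2]
  ring

lemma sliceF_inner_integral (hml : Measurable fun z : Θ × Y => l z.2 z.1)
    (hnorm : ∀ θ, ∫ y, l y θ ∂ν = 1) (M : ℕ) (i₀ : Fin M) (θs : Fin M → Θ) :
    ∫ ys : Fin M → Y, ∏ j, sliceF l M i₀ θs j (ys j) ∂(Measure.pi fun _ => ν)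
      = ∫ y, srH l M i₀ (θs, y) ∂ν := by
  letI : MeasureSpace Y := { volume := ν }
  haveI : SigmaFinite (volume : Measure Y) := inferInstanceAs (SigmaFinite ν)
  have := MeasureTheory.integral_fintype_prod_eq_prod (𝕜 := ℝ) (μ := fun _ : Fin M => ν)
    (fun j => sliceF l M i₀ θs j)
  rw [this]
  show (∏ j, ∫ y, sliceF l M i₀ θs j y ∂ν) = _
  rw [← Finset.mul_prod_erase Finset.univ (fun j => ∫ y, sliceF l M i₀ θs j y ∂ν)
      (Finset.mem_univ i₀)]
  have h2 : ∏ j ∈ Finset.univ.erase i₀, ∫ y, sliceF l M i₀ θs j y ∂ν = 1 := by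
    refine Finset.prod_eq_one fun j hj => ?_
    have : sliceF l M i₀ θs j = fun y => l y (θs j) := by
      funext y; exact if_neg (Finset.mem_erase.1 hj).1
    rw [this, hnorm]
  rw [h2, mul_one]
  congr 1
  funext y
  exact if_pos rfl

lemma sliceF_inner_lintegral (hml : Measurable fun z : Θ × Y => l z.2 z.1)
    (hl : ∀ y θ, 0 < l y θ) (hnorm : ∀ θ, ∫ y, l y θ ∂ν = 1) (M : ℕ) (i₀ : Fin M)
    (θs : Fin M → Θ) :
    ∫⁻ ys : Fin M → Y, ENNReal.ofReal ‖∏ j, sliceF l M i₀ θs j (ys j)‖ ∂(Measure.pi fun _ => ν)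
      = ∫⁻ y, ENNReal.ofReal ‖srH l M i₀ (θs, y)‖ ∂ν := by
  have hpt : ∀ ys : Fin M → Y, ENNReal.ofReal ‖∏ j, sliceF l M i₀ θs j (ys j)‖
      = ∏ j, ENNReal.ofReal ‖sliceF l M i₀ θs j (ys j)‖ := by
    intro ys
    rw [norm_prod, ENNReal.ofReal_prod_of_nonneg fun j _ => norm_nonneg _]
  simp_rw [hpt]
  rw [lintegral_pi_fin_prod ν M (fun j y => ENNReal.ofReal ‖sliceF l M i₀ θs j y‖)
    (fun j => (meas_sliceF hml M i₀ θs j).norm.ennreal_ofReal),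
    ← Finset.mul_prod_erase Finset.univ (fun j => ∫⁻ y, ENNReal.ofReal ‖sliceF l M i₀ θs j y‖ ∂ν)
      (Finset.mem_univ i₀)]
  have h2 : ∏ j ∈ Finset.univ.erase i₀, ∫⁻ y, ENNReal.ofReal ‖sliceF l M i₀ θs j y‖ ∂ν = 1 := by
    refine Finset.prod_eq_one fun j hj => ?_
    have : ∀ y, ENNReal.ofReal ‖sliceF l M i₀ θs j y‖ = ENNReal.ofReal (l y (θs j)) := by
      intro y
      rw [show sliceF l M i₀ θs j y = l y (θs j) from if_neg (Finset.mem_erase.1 hj).1,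
        Real.norm_eq_abs, abs_of_pos (hl _ _)]
    simp_rw [this]
    exact lint_l_y hml hl hnorm _
  rw [h2, mul_one]
  congr 1
  funext y
  rw [show sliceF l M i₀ θs i₀ y
    = l y (θs i₀) * Real.log (l y (θs i₀) / ((M : ℝ)⁻¹ * ∑ j', l y (θs j'))) from if_pos rfl]
  rfl

end Aux4

section Aux5

variable {Θ Y : Type*} [MeasurableSpace Θ] [MeasurableSpace Y]
  {Pθ : Measure Θ} [IsProbabilityMeasure Pθ] {ν : Measure Y} [SigmaFinite ν]
  {l : Y → Θ → ℝ}

lemma srH_swap (l : Y → Θ → ℝ) (M : ℕ) (i₀ k : Fin M)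
    (p : (Fin M → Θ) × Y) :
    srH l M i₀
      ((MeasurableEquiv.piCongrLeft (fun _ => Θ) (Equiv.swap i₀ k)).prodCongr
        (MeasurableEquiv.refl Y) p) = srH l M k p := by
  obtain ⟨θs, y⟩ := p
  have hpc : (MeasurableEquiv.piCongrLeft (fun _ => Θ) (Equiv.swap i₀ k)) θs
      = fun j => θs (Equiv.swap i₀ k j) :=
    funext fun j => by rw [piCongrLeft_const_apply, Equiv.symm_swap]
  have hE : ((MeasurableEquiv.piCongrLeft (fun _ => Θ) (Equiv.swap i₀ k)).prodCongr
      (MeasurableEquiv.refl Y)) (θs, y) = ((fun j => θs (Equiv.swap i₀ k j)), y) := by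
    show ((MeasurableEquiv.piCongrLeft (fun _ => Θ) (Equiv.swap i₀ k)) θs, y) = _
    rw [hpc]
  rw [hE]
  unfold srH
  show (l y (θs (Equiv.swap i₀ k i₀))) * Real.log ((l y (θs (Equiv.swap i₀ k i₀)))
      / ((M:ℝ)⁻¹ * ∑ j, l y (θs (Equiv.swap i₀ k j)))) = _
  rw [Equiv.swap_apply_left,
    Equiv.sum_comp (Equiv.swap i₀ k) (fun j => l y (θs j))]

/-- main reduction: expectation of the estimator equals `∫ srG` -/
lemma reduction (hml : Measurable fun z : Θ × Y => l z.2 z.1)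
    (hl : ∀ y θ, 0 < l y θ) (hnorm : ∀ θ, ∫ y, l y θ ∂ν = 1) {M : ℕ} (hM : 1 ≤ M)
    (hInt : Integrable
      (fun w : Fin M → Θ × Y => (∏ i, l (w i).2 (w i).1) *
        ((M : ℝ)⁻¹ * ∑ i, Real.log (l (w i).2 (w i).1 /
          ((M : ℝ)⁻¹ * ∑ j, l (w i).2 (w j).1))))
      (Measure.pi fun _ : Fin M => Pθ.prod ν)) :
    Integrable (srG l M) ((Measure.pi fun _ : Fin M => Pθ).prod ν) ∧
    (∫ w : Fin M → Θ × Y, (∏ i, l (w i).2 (w i).1) *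
        ((M : ℝ)⁻¹ * ∑ i, Real.log (l (w i).2 (w i).1 /
          ((M : ℝ)⁻¹ * ∑ j, l (w i).2 (w j).1)))
        ∂(Measure.pi fun _ : Fin M => Pθ.prod ν))
      = ∫ p, srG l M p ∂((Measure.pi fun _ : Fin M => Pθ).prod ν) := by
  have hM0 : ((M : ℝ)) ≠ 0 := by positivity
  set i₀ : Fin M := ⟨0, hM⟩ with hi₀
  have hIti : ∀ i, Integrable (srTerm l M i) (Measure.pi fun _ : Fin M => Pθ.prod ν) :=
    int_srTerm hml hl hnorm hM hInt
  -- step b : ∫ big = ∫ srTerm i₀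
  have hbig : (fun w : Fin M → Θ × Y => (∏ i, l (w i).2 (w i).1) *
        ((M : ℝ)⁻¹ * ∑ i, Real.log (l (w i).2 (w i).1 /
          ((M : ℝ)⁻¹ * ∑ j, l (w i).2 (w j).1))))
      = fun w => (M : ℝ)⁻¹ * ∑ i, srTerm l M i w := by
    funext w
    rw [sum_srTerm_eq M hM w, inv_mul_cancel_left₀ hM0]
  have hb : (∫ w : Fin M → Θ × Y, (∏ i, l (w i).2 (w i).1) *
        ((M : ℝ)⁻¹ * ∑ i, Real.log (l (w i).2 (w i).1 /
          ((M : ℝ)⁻¹ * ∑ j, l (w i).2 (w j).1)))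
        ∂(Measure.pi fun _ : Fin M => Pθ.prod ν))
      = ∫ w, srTerm l M i₀ w ∂(Measure.pi fun _ : Fin M => Pθ.prod ν) := by
    rw [hbig, MeasureTheory.integral_const_mul,
      MeasureTheory.integral_finset_sum _ fun i _ => hIti i]
    have : ∀ i ∈ Finset.univ, (∫ w, srTerm l M i w ∂(Measure.pi fun _ : Fin M => Pθ.prod ν))
        = ∫ w, srTerm l M i₀ w ∂(Measure.pi fun _ : Fin M => Pθ.prod ν) :=
      fun i _ => integral_srTerm_eq hml i i₀
    rw [Finset.sum_congr rfl this, Finset.sum_const, Finset.card_univ, Fintype.card_fin,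
      nsmul_eq_mul, inv_mul_cancel_left₀ hM0]
  -- step c : to the split space
  have hΦ := measurePreserving_arrowProdEquivProdArrow Θ Y (Fin M) (fun _ => Pθ) (fun _ => ν)
  set F : (Fin M → Θ) × (Fin M → Y) → ℝ := fun p =>
    (∏ j, l (p.2 j) (p.1 j)) *
      Real.log (l (p.2 i₀) (p.1 i₀) / ((M : ℝ)⁻¹ * ∑ j, l (p.2 i₀) (p.1 j))) with hFdef
  have hFcomp : (fun w => F (MeasurableEquiv.arrowProdEquivProdArrow Θ Y (Fin M) w))
      = srTerm l M i₀ := by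
    funext w
    rfl
  have hIntF : Integrable F ((Measure.pi fun _ : Fin M => Pθ).prod
      (Measure.pi fun _ : Fin M => ν)) := by
    refine (hΦ.integrable_comp_emb (MeasurableEquiv.measurableEmbedding _)).mp ?_
    show Integrable (fun w => F (MeasurableEquiv.arrowProdEquivProdArrow Θ Y (Fin M) w)) _
    rw [hFcomp]; exact hIti i₀
  have hc : (∫ w, srTerm l M i₀ w ∂(Measure.pi fun _ : Fin M => Pθ.prod ν))
      = ∫ p, F p ∂((Measure.pi fun _ : Fin M => Pθ).prod (Measure.pi fun _ : Fin M => ν)) := by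
    rw [← hΦ.integral_comp' F]
    exact integral_congr_ae (Filter.Eventually.of_forall fun w =>
      congrFun hFcomp w)
  -- step d : integrate out the redundant y's
  have hfact : ∀ (θs : Fin M → Θ) (ys : Fin M → Y),
      F (θs, ys) = ∏ j, sliceF l M i₀ θs j (ys j) := fun θs ys =>
    sliceF_fact l M i₀ θs ys
  have hIntH : Integrable (srH l M i₀) ((Measure.pi fun _ : Fin M => Pθ).prod ν) := by
      refine ⟨(meas_srH hml M i₀).aestronglyMeasurable, ?_⟩
      rw [hasFiniteIntegral_iff_norm]
      have hF2 := hIntF.2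
      rw [hasFiniteIntegral_iff_norm] at hF2
      rw [MeasureTheory.lintegral_prod _
        ((meas_srH hml M i₀).norm.ennreal_ofReal).aemeasurable]
      rw [MeasureTheory.lintegral_prod _ ((by
        have : Measurable F := by
          rw [hFdef]
          refine Measurable.mul (Finset.measurable_prod _ fun j _ => ?_) ?_
          · have m : Measurable fun p : (Fin M → Θ) × (Fin M → Y) => (p.1 j, p.2 j) :=
              ((measurable_pi_apply j).comp measurable_fst).prodMk
                ((measurable_pi_apply j).comp measurable_snd)
            exact hml.comp m
          · have mij : ∀ j' : Fin M,
                Measurable fun p : (Fin M → Θ) × (Fin M → Y) => l (p.2 i₀) (p.1 j') := by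
              intro j'
              have m : Measurable fun p : (Fin M → Θ) × (Fin M → Y) => (p.1 j', p.2 i₀) :=
                ((measurable_pi_apply j').comp measurable_fst).prodMk
                  ((measurable_pi_apply i₀).comp measurable_snd)
              exact hml.comp m
            exact (Measurable.div (mij i₀)
              (measurable_const.mul (Finset.measurable_sum _ fun j' _ => mij j'))).log
        exact this.norm.ennreal_ofReal.aemeasurable) :
          AEMeasurable (fun p => ENNReal.ofReal ‖F p‖) _)] at hF2
      refine lt_of_eq_of_lt ?_ hF2
      refine lintegral_congr fun θs => ?_
      rw [← sliceF_inner_lintegral hml hl hnorm M i₀ θs]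
      refine lintegral_congr fun ys => ?_
      rw [← hfact θs ys]
  have hd : (∫ p, F p ∂((Measure.pi fun _ : Fin M => Pθ).prod (Measure.pi fun _ : Fin M => ν)))
      = ∫ p, srH l M i₀ p ∂((Measure.pi fun _ : Fin M => Pθ).prod ν) := by
    rw [MeasureTheory.integral_prod _ hIntF, MeasureTheory.integral_prod _ hIntH]
    refine integral_congr_ae (Filter.Eventually.of_forall fun θs => ?_)
    simp_rw [hfact θs]
    exact sliceF_inner_integral hml hnorm M i₀ θs
  -- step e : symmetrize over the tilt index
  have hmpk : ∀ k : Fin M, MeasurePreserving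
      (⇑((MeasurableEquiv.piCongrLeft (fun _ => Θ) (Equiv.swap i₀ k)).prodCongr
        (MeasurableEquiv.refl Y)))
      ((Measure.pi fun _ : Fin M => Pθ).prod ν)
      ((Measure.pi fun _ : Fin M => Pθ).prod ν) := by
    intro k
    exact (measurePreserving_piCongrLeft (fun _ : Fin M => Pθ) (Equiv.swap i₀ k)).prod
      (MeasurePreserving.id ν)
  have hHk : ∀ k, (∫ p, srH l M k p ∂((Measure.pi fun _ : Fin M => Pθ).prod ν))
      = ∫ p, srH l M i₀ p ∂((Measure.pi fun _ : Fin M => Pθ).prod ν) := by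
    intro k
    rw [← (hmpk k).integral_comp' (srH l M i₀)]
    exact integral_congr_ae (Filter.Eventually.of_forall fun p => (srH_swap l M i₀ k p).symm)
  have hIntHk' : ∀ k, Integrable (srH l M k) ((Measure.pi fun _ : Fin M => Pθ).prod ν) := by
    intro k
    have := ((hmpk k).integrable_comp_emb
      (MeasurableEquiv.measurableEmbedding _)).mpr hIntH
    refine this.congr (Filter.Eventually.of_forall fun p => ?_)
    exact srH_swap l M i₀ k p
  have hIntG : Integrable (srG l M) ((Measure.pi fun _ : Fin M => Pθ).prod ν) := by
    unfold srG
    exact (integrable_finset_sum _ fun k _ => hIntHk' k).const_mul _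
  refine ⟨hIntG, ?_⟩
  rw [hb, hc, hd]
  unfold srG
  rw [MeasureTheory.integral_const_mul,
    MeasureTheory.integral_finset_sum _ fun k _ => hIntHk' k,
    Finset.sum_congr rfl fun k _ => hHk k, Finset.sum_const, Finset.card_univ,
    Fintype.card_fin, nsmul_eq_mul, inv_mul_cancel_left₀ hM0]

end Aux5

section Aux6

lemma sum_shift_fin {M₂ : ℕ} [NeZero M₂] (c : Fin M₂) (f : Fin M₂ → ℝ) :
    ∑ r : Fin M₂, f (c + r) = ∑ k, f k :=
  Fintype.sum_equiv (Equiv.addLeft c) (fun r => f (c + r)) f (fun r => by simp)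

lemma double_count {M₁ M₂ : ℕ} (hM : M₁ ≤ M₂) [NeZero M₂] (f : Fin M₂ → ℝ) :
    ∑ r : Fin M₂, ∑ i : Fin M₁, f (Fin.castLE hM i + r) = (M₁ : ℝ) * ∑ k, f k := by
  rw [Finset.sum_comm]
  have : ∀ i : Fin M₁, ∑ r : Fin M₂, f (Fin.castLE hM i + r) = ∑ k, f k :=
    fun i => sum_shift_fin (Fin.castLE hM i) f
  rw [Finset.sum_congr rfl fun i _ => this i, Finset.sum_const, Finset.card_univ,
    Fintype.card_fin, nsmul_eq_mul]

lemma gfun_eq (m : ℕ) (hm : 1 ≤ m) (v : Fin m → ℝ) (hv : ∀ k, 0 < v k) :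
    (m : ℝ)⁻¹ * ∑ k, v k * Real.log (v k / ((m : ℝ)⁻¹ * ∑ j, v j))
      = (m : ℝ)⁻¹ * (∑ k, v k * Real.log (v k))
        - ((m : ℝ)⁻¹ * ∑ j, v j) * Real.log ((m : ℝ)⁻¹ * ∑ j, v j) := by
  have hm0 : (0 : ℝ) < m := by exact_mod_cast hm
  have hA : 0 < (m : ℝ)⁻¹ * ∑ j, v j :=
    mul_pos (inv_pos.2 hm0) (Finset.sum_pos (fun j _ => hv j) ⟨⟨0, hm⟩, Finset.mem_univ _⟩)
  have : ∀ k, v k * Real.log (v k / ((m : ℝ)⁻¹ * ∑ j, v j))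
      = v k * Real.log (v k) - v k * Real.log ((m : ℝ)⁻¹ * ∑ j, v j) := by
    intro k
    rw [Real.log_div (hv k).ne' hA.ne']
    ring
  simp_rw [this]
  rw [Finset.sum_sub_distrib, ← Finset.sum_mul]
  ring

lemma key_jensen {M₁ M₂ : ℕ} (hM₁ : 1 ≤ M₁) (hM : M₁ ≤ M₂) [NeZero M₂]
    (w : Fin M₂ → ℝ) (hw : ∀ k, 0 < w k) :
    (M₂ : ℝ)⁻¹ * ∑ r : Fin M₂, ((M₁ : ℝ)⁻¹ *
        ∑ i : Fin M₁, w (Fin.castLE hM i + r) * Real.log (w (Fin.castLE hM i + r) /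
          ((M₁ : ℝ)⁻¹ * ∑ j : Fin M₁, w (Fin.castLE hM j + r))))
      ≤ (M₂ : ℝ)⁻¹ * ∑ k, w k * Real.log (w k / ((M₂ : ℝ)⁻¹ * ∑ j, w j)) := by
  have hM₂1 : 1 ≤ M₂ := le_trans hM₁ hM
  have hm1 : (0 : ℝ) < M₁ := by exact_mod_cast hM₁
  have hm2 : (0 : ℝ) < M₂ := by exact_mod_cast hM₂1
  set φ : ℝ → ℝ := fun x => x * Real.log x with hφ
  set A : Fin M₂ → ℝ := fun r => (M₁ : ℝ)⁻¹ * ∑ i : Fin M₁, w (Fin.castLE hM i + r) with hA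
  have hApos : ∀ r, 0 ≤ A r := by
    intro r
    exact le_of_lt (mul_pos (inv_pos.2 hm1)
      (Finset.sum_pos (fun i _ => hw _) ⟨⟨0, hM₁⟩, Finset.mem_univ _⟩))
  -- rewrite both sides via gfun_eq
  have hL : ∀ r : Fin M₂, (M₁ : ℝ)⁻¹ *
        ∑ i : Fin M₁, w (Fin.castLE hM i + r) * Real.log (w (Fin.castLE hM i + r) /
          ((M₁ : ℝ)⁻¹ * ∑ j : Fin M₁, w (Fin.castLE hM j + r)))
      = (M₁ : ℝ)⁻¹ * (∑ i : Fin M₁, w (Fin.castLE hM i + r) *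
          Real.log (w (Fin.castLE hM i + r))) - φ (A r) := by
    intro r
    exact gfun_eq M₁ hM₁ (fun i => w (Fin.castLE hM i + r)) (fun i => hw _)
  have hR : (M₂ : ℝ)⁻¹ * ∑ k, w k * Real.log (w k / ((M₂ : ℝ)⁻¹ * ∑ j, w j))
      = (M₂ : ℝ)⁻¹ * (∑ k, w k * Real.log (w k))
        - φ ((M₂ : ℝ)⁻¹ * ∑ j, w j) :=
    gfun_eq M₂ hM₂1 w hw
  simp_rw [hL]
  rw [hR, Finset.sum_sub_distrib, mul_sub]
  -- the first summands agree
  have h1 : (M₂ : ℝ)⁻¹ * ∑ r : Fin M₂, (M₁ : ℝ)⁻¹ * (∑ i : Fin M₁,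
        w (Fin.castLE hM i + r) * Real.log (w (Fin.castLE hM i + r)))
      = (M₂ : ℝ)⁻¹ * (∑ k, w k * Real.log (w k)) := by
    rw [← Finset.mul_sum, double_count hM (fun k => w k * Real.log (w k))]
    field_simp
  rw [h1]
  -- Jensen for the second summands
  refine sub_le_sub_left ?_ _
  have hsum : ∑ r : Fin M₂, (M₂ : ℝ)⁻¹ • A r = (M₂ : ℝ)⁻¹ * ∑ j, w j := by
    simp_rw [smul_eq_mul, ← Finset.mul_sum, hA]
    rw [← Finset.mul_sum, double_count hM w]
    field_simp
  have hjensen := convexOn_mul_log.map_sum_le (t := Finset.univ)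
    (w := fun _ : Fin M₂ => (M₂ : ℝ)⁻¹) (p := A)
    (fun r _ => le_of_lt (inv_pos.2 hm2))
    (by rw [Finset.sum_const, Finset.card_univ, Fintype.card_fin, nsmul_eq_mul,
      mul_inv_cancel₀ hm2.ne'])
    (fun r _ => hApos r)
  rw [hsum] at hjensen
  refine le_trans hjensen ?_
  simp_rw [smul_eq_mul, hφ]
  rw [← Finset.mul_sum]

end Aux6

section Aux7

variable {Θ : Type*} [MeasurableSpace Θ]

lemma pi_map_castLE {m n : ℕ} (h : m ≤ n) (μ : Measure Θ) [IsProbabilityMeasure μ] :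
    (Measure.pi fun _ : Fin n => μ).map (fun w : Fin n → Θ => w ∘ Fin.castLE h)
      = Measure.pi fun _ : Fin m => μ := by
  set k := n - m with hk
  have hnm : m + k = n := by omega
  set e : Fin m ⊕ Fin k ≃ Fin n := finSumFinEquiv.trans (finCongr hnm) with he
  have h1 := measurePreserving_piCongrLeft (fun _ : Fin n => μ) e
  have h2 := measurePreserving_sumPiEquivProdPi_symm
    (fun _ : Fin m ⊕ Fin k => μ)
  have hres : Measurable (fun w : Fin n → Θ => w ∘ Fin.castLE h) :=
    measurable_pi_lambda _ fun i => measurable_pi_apply _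
  have hcomp : ((fun w : Fin n → Θ => w ∘ Fin.castLE h)
      ∘ ⇑(MeasurableEquiv.piCongrLeft (fun _ => Θ) e)
      ∘ ⇑(MeasurableEquiv.sumPiEquivProdPi (fun _ : Fin m ⊕ Fin k => Θ)).symm)
      = Prod.fst := by
    funext p
    funext i
    have hei : e (Sum.inl i) = Fin.castLE h i := by
      apply Fin.ext
      simp [he, finSumFinEquiv]
    have hsym : e.symm (Fin.castLE h i) = Sum.inl i := by
      rw [← hei, Equiv.symm_apply_apply]
    show (MeasurableEquiv.piCongrLeft (fun _ => Θ) e)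
      ((MeasurableEquiv.sumPiEquivProdPi (fun _ : Fin m ⊕ Fin k => Θ)).symm p)
      (Fin.castLE h i) = p.1 i
    rw [piCongrLeft_const_apply, hsym]
    rfl
  have step : (Measure.pi fun _ : Fin n => μ)
      = ((Measure.pi fun _ : Fin m => μ).prod (Measure.pi fun _ : Fin k => μ)).map
          (⇑(MeasurableEquiv.piCongrLeft (fun _ => Θ) e)
            ∘ ⇑(MeasurableEquiv.sumPiEquivProdPi (fun _ : Fin m ⊕ Fin k => Θ)).symm) := by
    rw [← h1.map_eq, ← h2.map_eq,
      Measure.map_map (MeasurableEquiv.measurable _) (MeasurableEquiv.measurable _)]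
  rw [step, Measure.map_map hres
    ((MeasurableEquiv.measurable _).comp (MeasurableEquiv.measurable _))]
  have hcomp2 : ((fun w : Fin n → Θ => w ∘ Fin.castLE h)
      ∘ (⇑(MeasurableEquiv.piCongrLeft (fun _ => Θ) e)
        ∘ ⇑(MeasurableEquiv.sumPiEquivProdPi (fun _ : Fin m ⊕ Fin k => Θ)).symm))
      = (Prod.fst : (Fin m → Θ) × (Fin k → Θ) → (Fin m → Θ)) := by
    funext p
    exact congrFun hcomp p
  rw [hcomp2, Measure.map_fst_prod]
  simp

end Aux7

/-- Theorem 2 (part 2): the expectation of the srNMC estimator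
`Û^M_srNMC(λ) = (1/M) Σᵢ log[ l(yⁱ|θⁱ,λ) / ((1/M) Σⱼ l(yⁱ|θʲ,λ)) ]`
is monotonically increasing in `M`: for `1 ≤ M₁ ≤ M₂`,
`E[Û^{M₁}_srNMC(λ)] ≤ E[Û^{M₂}_srNMC(λ)]`.
The samples `(θⁱ, yⁱ)` are i.i.d. from the joint law of parameter and
observation, which has density `z ↦ l(z.2|z.1,λ)` w.r.t. `Pθ ⊗ ν`. -/
theorem srNMC_expectation_monotone
    {Θ Y : Type*} [MeasurableSpace Θ] [MeasurableSpace Y]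
    (Pθ : Measure Θ) [IsProbabilityMeasure Pθ]
    (ν : Measure Y) [SigmaFinite ν]
    (l : Y → Θ → ℝ)
    (hml : Measurable fun z : Θ × Y => l z.2 z.1)
    (hl : ∀ y θ, 0 < l y θ)
    -- `l(·|θ,λ)` is a probability density w.r.t. `ν` for every `θ`
    (hnorm : ∀ θ, ∫ y, l y θ ∂ν = 1)
    (M₁ M₂ : ℕ) (hM₁ : 1 ≤ M₁) (hM : M₁ ≤ M₂)
    -- integrability (all expectations are finite)
    (hIntE : ∀ M : ℕ, 1 ≤ M → Integrable
      (fun w : Fin M → Θ × Y => (∏ i, l (w i).2 (w i).1) *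
        ((M : ℝ)⁻¹ * ∑ i, Real.log (l (w i).2 (w i).1 /
          ((M : ℝ)⁻¹ * ∑ j, l (w i).2 (w j).1))))
      (Measure.pi fun _ : Fin M => Pθ.prod ν)) :
    (∫ w : Fin M₁ → Θ × Y, (∏ i, l (w i).2 (w i).1) *
        ((M₁ : ℝ)⁻¹ * ∑ i, Real.log (l (w i).2 (w i).1 /
          ((M₁ : ℝ)⁻¹ * ∑ j, l (w i).2 (w j).1)))
        ∂(Measure.pi fun _ : Fin M₁ => Pθ.prod ν)) ≤
      ∫ w : Fin M₂ → Θ × Y, (∏ i, l (w i).2 (w i).1) *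
        ((M₂ : ℝ)⁻¹ * ∑ i, Real.log (l (w i).2 (w i).1 /
          ((M₂ : ℝ)⁻¹ * ∑ j, l (w i).2 (w j).1)))
        ∂(Measure.pi fun _ : Fin M₂ => Pθ.prod ν) := by
  have hM₂1 : 1 ≤ M₂ := le_trans hM₁ hM
  haveI : NeZero M₂ := ⟨by omega⟩
  obtain ⟨hIntG₁, hI₁⟩ := reduction hml hl hnorm hM₁ (hIntE M₁ hM₁)
  obtain ⟨hIntG₂, hI₂⟩ := reduction hml hl hnorm hM₂1 (hIntE M₂ hM₂1)
  rw [hI₁, hI₂]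
  set pi₁ : Measure (Fin M₁ → Θ) := Measure.pi fun _ => Pθ with hpi₁
  set pi₂ : Measure (Fin M₂ → Θ) := Measure.pi fun _ => Pθ with hpi₂
  set Ψ : Fin M₂ → ((Fin M₂ → Θ) × Y → (Fin M₁ → Θ) × Y) :=
    fun r p => (fun i => p.1 (Fin.castLE hM i + r), p.2) with hΨ
  have hmeasΨ : ∀ r, Measurable (Ψ r) := by
    intro r
    exact ((measurable_pi_lambda _ fun i =>
      (measurable_pi_apply _).comp measurable_fst)).prodMk measurable_snd
  have hmapΨ : ∀ r, (pi₂.prod ν).map (Ψ r) = pi₁.prod ν := by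
    intro r
    have hperm := measurePreserving_piCongrLeft (fun _ : Fin M₂ => Pθ) ((Equiv.addRight r).symm)
    have hpermfn : ⇑(MeasurableEquiv.piCongrLeft (fun _ => Θ) ((Equiv.addRight r).symm))
        = fun θs : Fin M₂ → Θ => (fun kk => θs (kk + r)) := by
      funext θs
      funext j
      rw [piCongrLeft_const_apply]
      simp
    have hΨdecomp : Ψ r = (Prod.map (fun w : Fin M₂ → Θ => w ∘ Fin.castLE hM) id)
        ∘ (Prod.map (fun θs : Fin M₂ → Θ => fun kk => θs (kk + r)) id) := by
      funext p
      rfl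
    have hres : Measurable (fun w : Fin M₂ → Θ => w ∘ Fin.castLE hM) :=
      measurable_pi_lambda _ fun i => measurable_pi_apply _
    have hshift : Measurable (fun θs : Fin M₂ → Θ => fun kk => θs (kk + r)) :=
      measurable_pi_lambda _ fun i => measurable_pi_apply _
    have h5 : (pi₂.prod ν).map (Prod.map (fun θs : Fin M₂ → Θ => fun kk => θs (kk + r)) id)
        = pi₂.prod ν := by
      rw [← hpermfn]
      exact (hperm.prod (MeasurePreserving.id ν)).map_eq
    rw [hΨdecomp, ← Measure.map_map (hres.prodMap measurable_id)
      (hshift.prodMap measurable_id), h5,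
      ← Measure.map_prod_map _ _ hres measurable_id, Measure.map_id, hpi₁, hpi₂,
      pi_map_castLE hM Pθ]
  have hint : ∀ r, Integrable (fun p => srG l M₁ (Ψ r p)) (pi₂.prod ν) := by
    intro r
    have h := hIntG₁
    rw [← hmapΨ r] at h
    exact (integrable_map_measure (meas_srG hml M₁).aestronglyMeasurable
      (hmeasΨ r).aemeasurable).mp h
  have hieq : ∀ r, ∫ p, srG l M₁ (Ψ r p) ∂(pi₂.prod ν)
      = ∫ p, srG l M₁ p ∂(pi₁.prod ν) := by
    intro r
    rw [← hmapΨ r, integral_map (hmeasΨ r).aemeasurable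
      (meas_srG hml M₁).aestronglyMeasurable]
  have hM₂0 : ((M₂ : ℝ)) ≠ 0 := by positivity
  calc ∫ p, srG l M₁ p ∂(pi₁.prod ν)
      = (M₂ : ℝ)⁻¹ * ∑ r : Fin M₂, ∫ p, srG l M₁ (Ψ r p) ∂(pi₂.prod ν) := by
        rw [Finset.sum_congr rfl fun r _ => hieq r, Finset.sum_const, Finset.card_univ,
          Fintype.card_fin, nsmul_eq_mul, inv_mul_cancel_left₀ hM₂0]
    _ = ∫ p, (M₂ : ℝ)⁻¹ * ∑ r : Fin M₂, srG l M₁ (Ψ r p) ∂(pi₂.prod ν) := by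
        rw [← MeasureTheory.integral_finset_sum _ fun r _ => hint r,
          ← MeasureTheory.integral_const_mul]
    _ ≤ ∫ p, srG l M₂ p ∂(pi₂.prod ν) := by
        refine integral_mono ((integrable_finset_sum _ fun r _ => hint r).const_mul _)
          hIntG₂ ?_
        intro p
        have := key_jensen hM₁ hM (fun k => l p.2 (p.1 k)) (fun k => hl _ _)
        simpa [srG, srH, hΨ] using this
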